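/- Every left-invariant vector field U on the unit quaternion group S^3 with the round metric is divergence-free and satisfies curl U = -2U. -/

import Mathlib

open scoped RealInnerProductSpace Quaternion

noncomputable section

/-- Coordinates of a quaternion in the standard basis `(1, i, j, k)` of `ℍ ≅ ℝ⁴`. -/
def qCoords (a : ℍ[ℝ]) : Fin 4 → ℝ := ![a.re, a.imI, a.imJ, a.imK]

/-- The triple product `[A,B,C]` in `ℍ ≅ ℝ⁴`: the unique quaternion satisfying
`⟪[A,B,C], X⟫ = det(A,B,C,X)` in the standard coordinates.  For `A = q ∈ S³` and `B, C`
tangent at `q`, this computes the cross product `B × C` in the oriented 3-space `T_qS³`. -/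
def tripQ (A B C : ℍ[ℝ]) : ℍ[ℝ] :=
  ⟨Matrix.det (Matrix.of ![qCoords A, qCoords B, qCoords C, Pi.single 0 1]),
   Matrix.det (Matrix.of ![qCoords A, qCoords B, qCoords C, Pi.single 1 1]),
   Matrix.det (Matrix.of ![qCoords A, qCoords B, qCoords C, Pi.single 2 1]),
   Matrix.det (Matrix.of ![qCoords A, qCoords B, qCoords C, Pi.single 3 1])⟩

lemma det_fin_four' (A : Matrix (Fin 4) (Fin 4) ℝ) :
    A.det = A 0 0*A 1 1*A 2 2*A 3 3 - A 0 0*A 1 1*A 2 3*A 3 2 - A 0 0*A 1 2*A 2 1*A 3 3 + A 0 0*A 1 2*A 2 3*A 3 1 + A 0 0*A 1 3*A 2 1*A 3 2 - A 0 0*A 1 3*A 2 2*A 3 1 - A 0 1*A 1 0*A 2 2*A 3 3 + A 0 1*A 1 0*A 2 3*A 3 2 + A 0 1*A 1 2*A 2 0*A 3 3 - A 0 1*A 1 2*A 2 3*A 3 0 - A 0 1*A 1 3*A 2 0*A 3 2 + A 0 1*A 1 3*A 2 2*A 3 0 + A 0 2*A 1 0*A 2 1*A 3 3 - A 0 2*A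 1 0*A 2 3*A 3 1 - A 0 2*A 1 1*A 2 0*A 3 3 + A 0 2*A 1 1*A 2 3*A 3 0 + A 0 2*A 1 3*A 2 0*A 3 1 - A 0 2*A 1 3*A 2 1*A 3 0 - A 0 3*A 1 0*A 2 1*A 3 2 + A 0 3*A 1 0*A 2 2*A 3 1 + A 0 3*A 1 1*A 2 0*A 3 2 - A 0 3*A 1 1*A 2 2*A 3 0 - A 0 3*A 1 2*A 2 0*A 3 1 + A 0 3*A 1 2*A 2 1*A 3 0 := by
  simp [Matrix.det_succ_row_zero, Fin.sum_univ_succ, Fin.succAbove]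
  norm_num [show (Fin.succ 2 : Fin 4) = 3 from rfl, show (Fin.castSucc 2 : Fin 4) = 2 from rfl,
    show ((1 : Fin 4) < 3) from by decide]
  ring

lemma fderiv_mul_right (u : ℍ[ℝ]) (q X : ℍ[ℝ]) :
    fderiv ℝ (fun p : ℍ[ℝ] => p * u) q X = X * u := by
  have h : HasFDerivAt (fun p : ℍ[ℝ] => p * u)
      ((ContinuousLinearMap.id ℝ ℍ[ℝ]).smulRight u) q :=
    (hasFDerivAt_id q).mul_const' u
  rw [h.fderiv]
  simp [smul_eq_mul]

@[simp] lemma qCoords_zero (a : ℍ[ℝ]) : qCoords a 0 = a.re := rfl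
@[simp] lemma qCoords_one (a : ℍ[ℝ]) : qCoords a 1 = a.imI := rfl
@[simp] lemma qCoords_two (a : ℍ[ℝ]) : qCoords a 2 = a.imJ := rfl
@[simp] lemma qCoords_three (a : ℍ[ℝ]) : qCoords a 3 = a.imK := rfl

set_option maxHeartbeats 1000000 in
lemma tripQ_comp (A B C : ℍ[ℝ]) (k : Fin 4) :
    Matrix.det (Matrix.of ![qCoords A, qCoords B, qCoords C, Pi.single k 1]) =
      -(A.imI * B.imJ * C.imK - A.imI * B.imK * C.imJ
        - A.imJ * B.imI * C.imK + A.imJ * B.imK * C.imI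
        + A.imK * B.imI * C.imJ - A.imK * B.imJ * C.imI) * (if k = 0 then 1 else 0)
      + (A.re * B.imJ * C.imK - A.re * B.imK * C.imJ
        - A.imJ * B.re * C.imK + A.imJ * B.imK * C.re
        + A.imK * B.re * C.imJ - A.imK * B.imJ * C.re) * (if k = 1 then 1 else 0)
      - (A.re * B.imI * C.imK - A.re * B.imK * C.imI
        - A.imI * B.re * C.imK + A.imI * B.imK * C.re
        + A.imK * B.re * C.imI - A.imK * B.imI * C.re) * (if k = 2 then 1 else 0)
      + (A.re * B.imI * C.imJ - A.re * B.imJ * C.imI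
        - A.imI * B.re * C.imJ + A.imI * B.imJ * C.re
        + A.imJ * B.re * C.imI - A.imJ * B.imI * C.re) * (if k = 3 then 1 else 0) := by
  rw [det_fin_four']
  have e0 : ∀ v : Fin 4 → ℝ, ∀ j,
      (Matrix.of ![qCoords A, qCoords B, qCoords C, v]) 0 j = qCoords A j := fun _ _ => rfl
  have e1 : ∀ v : Fin 4 → ℝ, ∀ j,
      (Matrix.of ![qCoords A, qCoords B, qCoords C, v]) 1 j = qCoords B j := fun _ _ => rfl
  have e2 : ∀ v : Fin 4 → ℝ, ∀ j,
      (Matrix.of ![qCoords A, qCoords B, qCoords C, v]) 2 j = qCoords C j := fun _ _ => rfl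
  have e3 : ∀ v : Fin 4 → ℝ, ∀ j,
      (Matrix.of ![qCoords A, qCoords B, qCoords C, v]) 3 j = v j := fun _ _ => rfl
  simp only [e0, e1, e2, e3, Pi.single_apply, qCoords_zero, qCoords_one, qCoords_two,
    qCoords_three]
  fin_cases k <;> simp <;> ring

/-- Every left-invariant vector field `U(q) = q·u` (`u` a fixed imaginary quaternion) on
the group `S³` of unit quaternions with the round metric is divergence-free and
satisfies `curl U = -2U`.  The divergence at `q` is the sum `∑ ⟪∇_{bᵢ} U, bᵢ⟫` over an
orthonormal basis of `T_qS³`, and the curl at `q` is the unique tangent vector `c` with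
`⟪c, B × C⟫ = ⟪∇_B U, C⟫ - ⟪∇_C U, B⟫` for all tangent `B, C` at `q`. -/
theorem leftInvariant_divergenceFree_and_curl (u : ℍ[ℝ]) (hu : u.re = 0)
    (U : ℍ[ℝ] → ℍ[ℝ]) (hU : ∀ q, U q = q * u) (q : ℍ[ℝ]) (hq : ‖q‖ = 1) :
    (∀ b : Fin 3 → ℍ[ℝ], (∀ i, ⟪b i, q⟫ = 0) →
      (∀ i j, ⟪b i, b j⟫ = if i = j then (1 : ℝ) else 0) →
      ∑ i, ⟪fderiv ℝ U q (b i), b i⟫ = 0) ∧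
    (∀ B C : ℍ[ℝ], ⟪B, q⟫ = 0 → ⟪C, q⟫ = 0 →
      ⟪(-2 : ℝ) • U q, tripQ q B C⟫ = ⟪fderiv ℝ U q B, C⟫ - ⟪fderiv ℝ U q C, B⟫) := by
  have hUeq : U = fun p => p * u := funext hU
  subst hUeq
  have hq2 : q.re ^ 2 + q.imI ^ 2 + q.imJ ^ 2 + q.imK ^ 2 = 1 := by
    have := Quaternion.normSq_eq_norm_mul_self q
    rw [hq, Quaternion.normSq_def'] at this
    linarith [this]
  constructor
  · intro b _ _
    have key : ∀ X : ℍ[ℝ], ⟪X * u, X⟫ = 0 := by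
      intro X
      rw [Quaternion.inner_def]
      simp only [Quaternion.re_mul, Quaternion.imI_mul, Quaternion.imJ_mul, Quaternion.imK_mul,
        Quaternion.re_star, Quaternion.imI_star, Quaternion.imJ_star, Quaternion.imK_star, hu]
      ring
    simp only [fderiv_mul_right, key, Finset.sum_const_zero]
  · intro B C hB hC
    rw [Quaternion.inner_def] at hB hC
    simp only [Quaternion.re_mul, Quaternion.re_star, Quaternion.imI_star, Quaternion.imJ_star,
      Quaternion.imK_star, mul_neg, neg_neg, sub_neg_eq_add] at hB hC
    rw [Quaternion.inner_def]
    simp only [Quaternion.re_mul, Quaternion.re_star, Quaternion.imI_star, Quaternion.imJ_star,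
      Quaternion.imK_star]
    simp only [fderiv_mul_right, Quaternion.inner_def, tripQ, tripQ_comp,
      Quaternion.re_mul, Quaternion.imI_mul, Quaternion.imJ_mul, Quaternion.imK_mul,
      Quaternion.re_star, Quaternion.imI_star, Quaternion.imJ_star, Quaternion.imK_star,
      Quaternion.re_smul, Quaternion.imI_smul, Quaternion.imJ_smul, Quaternion.imK_smul, hu,
      smul_eq_mul]
    simp only [show ((0:Fin 4) = 0) = True from by simp, show ((0:Fin 4) = 1) = False from by simp,
      show ((0:Fin 4) = 2) = False from by simp, show ((0:Fin 4) = 3) = False from by simp,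
      show ((1:Fin 4) = 0) = False from by simp, show ((1:Fin 4) = 1) = True from by simp,
      show ((1:Fin 4) = 2) = False from by simp, show ((1:Fin 4) = 3) = False from by simp,
      show ((2:Fin 4) = 0) = False from by simp, show ((2:Fin 4) = 1) = False from by simp,
      show ((2:Fin 4) = 2) = True from by simp, show ((2:Fin 4) = 3) = False from by simp,
      show ((3:Fin 4) = 0) = False from by simp, show ((3:Fin 4) = 1) = False from by simp,
      show ((3:Fin 4) = 2) = False from by simp, show ((3:Fin 4) = 3) = True from by simp,
      if_true, if_false, mul_one, mul_zero, zero_mul, add_zero, zero_add, neg_zero, sub_zero,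
      zero_sub, mul_neg, neg_neg]
    linear_combination
      (2*B.imK*C.imJ*u.imI - 2*B.imK*C.imI*u.imJ - 2*B.imK*C.re*u.imK - 2*B.imJ*C.imK*u.imI +
        2*B.imJ*C.imI*u.imK - 2*B.imJ*C.re*u.imJ + 2*B.imI*C.imK*u.imJ - 2*B.imI*C.imJ*u.imK -
        2*B.imI*C.re*u.imI + 2*B.re*C.imK*u.imK + 2*B.re*C.imJ*u.imJ + 2*B.re*C.imI*u.imI) * hq2 +
      (-2*q.imK*C.imJ*u.imI + 2*q.imK*C.imI*u.imJ + 2*q.imK*C.re*u.imK + 2*q.imJ*C.imK*u.imI -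
        2*q.imJ*C.imI*u.imK + 2*q.imJ*C.re*u.imJ - 2*q.imI*C.imK*u.imJ + 2*q.imI*C.imJ*u.imK +
        2*q.imI*C.re*u.imI - 2*q.re*C.imK*u.imK - 2*q.re*C.imJ*u.imJ - 2*q.re*C.imI*u.imI) * hB +
      (2*q.imK*B.imJ*u.imI - 2*q.imK*B.imI*u.imJ - 2*q.imK*B.re*u.imK - 2*q.imJ*B.imK*u.imI +
        2*q.imJ*B.imI*u.imK - 2*q.imJ*B.re*u.imJ + 2*q.imI*B.imK*u.imJ - 2*q.imI*B.imJ*u.imK -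
        2*q.imI*B.re*u.imI + 2*q.re*B.imK*u.imK + 2*q.re*B.imJ*u.imJ + 2*q.re*B.imI*u.imI) * hC
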